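/- The family 𝓛 satisfies property (A_{ω₁}); equivalently, every subfamily H ⊆ 𝓛 such that for all distinct K, L ∈ H the intersection K ∩ L contains no element of 𝓛 is countable. -/

import Mathlib

open Set Filter MeasureTheory

/-- The family `𝓛` of all nonempty Lebesgue measurable sets `K ⊆ ℝ` such that every open
set meeting `K` does so in positive Lebesgue measure. -/
def MemCalL (K : Set ℝ) : Prop :=
  K.Nonempty ∧ NullMeasurableSet K volume ∧
    ∀ U : Set ℝ, IsOpen U → (K ∩ U = ∅ ∨ 0 < volume (K ∩ U))


lemma exists_memCalL_subset {A : Set ℝ} (hA : NullMeasurableSet A volume)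
    (hpos : 0 < volume A) :
    ∃ M : Set ℝ, (M.Nonempty ∧ NullMeasurableSet M volume ∧
      ∀ U : Set ℝ, IsOpen U → (M ∩ U = ∅ ∨ 0 < volume (M ∩ U))) ∧ M ⊆ A := by
  set N : Set ℝ := ⋃ (pq : ℚ × ℚ) (_ : volume (A ∩ Ioo (pq.1 : ℝ) pq.2) = 0),
      A ∩ Ioo (pq.1 : ℝ) pq.2 with hN
  have hNnull : volume N = 0 := by
    refine measure_iUnion_null fun pq => measure_iUnion_null fun h => h
  refine ⟨A \ N, ⟨?_, hA.diff (NullMeasurableSet.of_null hNnull), ?_⟩,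
    diff_subset⟩
  · rw [nonempty_iff_ne_empty]
    intro h
    have : volume A ≤ volume N := by
      apply measure_mono
      intro x hx
      by_contra hxN
      exact (eq_empty_iff_forall_notMem.mp h x) ⟨hx, hxN⟩
    rw [hNnull] at this
    exact hpos.ne' (le_antisymm this (zero_le))
  · intro U hU
    rcases eq_empty_or_nonempty ((A \ N) ∩ U) with h | h
    · exact Or.inl h
    · right
      obtain ⟨x, hxA, hxU⟩ := h
      obtain ⟨ε, hε, hball⟩ := Metric.isOpen_iff.mp hU x hxU
      obtain ⟨p, hp1, hp2⟩ := exists_rat_btwn (by linarith : x - ε < x)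
      obtain ⟨q, hq1, hq2⟩ := exists_rat_btwn (by linarith : x < x + ε)
      have hsub : Ioo (p : ℝ) q ⊆ U := fun y hy => by
        apply hball
        rw [Real.ball_eq_Ioo]
        exact ⟨by linarith [hy.1], by linarith [hy.2]⟩
      have hxIoo : x ∈ Ioo (p : ℝ) q := ⟨hp2, hq1⟩
      have hApq : 0 < volume (A ∩ Ioo (p : ℝ) q) := by
        rcases eq_or_ne (volume (A ∩ Ioo (p : ℝ) q)) 0 with h0 | h0
        · exfalso
          apply hxA.2
          exact mem_iUnion.mpr ⟨(p, q), mem_iUnion.mpr ⟨h0, hxA.1, hxIoo⟩⟩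
        · exact pos_iff_ne_zero.mpr h0
      have key : A ∩ Ioo (p : ℝ) q ⊆ ((A \ N) ∩ U) ∪ N := by
        intro y hy
        by_cases hyN : y ∈ N
        · exact Or.inr hyN
        · exact Or.inl ⟨⟨hy.1, hyN⟩, hsub hy.2⟩
      calc (0 : ENNReal) < volume (A ∩ Ioo (p : ℝ) q) := hApq
        _ ≤ volume (((A \ N) ∩ U) ∪ N) := measure_mono key
        _ ≤ volume ((A \ N) ∩ U) + volume N := measure_union_le _ _
        _ = volume ((A \ N) ∩ U) := by rw [hNnull, add_zero]

/-- Proposition 8: the family `𝓛` satisfies property (A_{ω₁}): among any `ω₁` many members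
there are two distinct ones whose intersection contains a member of `𝓛`. Equivalently,
every subfamily of `𝓛` in which pairwise intersections contain no member of `𝓛`
is countable. -/
theorem stmt_10 :
    (∀ H ⊆ {K : Set ℝ | MemCalL K}, Cardinal.mk H = Cardinal.aleph 1 →
      ∃ K ∈ H, ∃ L ∈ H, K ≠ L ∧ ∃ M : Set ℝ, MemCalL M ∧ M ⊆ K ∩ L) ∧
    (∀ H ⊆ {K : Set ℝ | MemCalL K},
      (∀ K ∈ H, ∀ L ∈ H, K ≠ L → ¬ ∃ M : Set ℝ, MemCalL M ∧ M ⊆ K ∩ L) →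
      H.Countable) := by
  have main : ∀ H ⊆ {K : Set ℝ | MemCalL K},
      (∀ K ∈ H, ∀ L ∈ H, K ≠ L → ¬ ∃ M : Set ℝ, MemCalL M ∧ M ⊆ K ∩ L) →
      H.Countable := by
    intro H hH hpair
    have hposm : ∀ K ∈ H, 0 < volume K := by
      intro K hK
      obtain ⟨hne, hm, hU⟩ := hH hK
      rcases hU univ isOpen_univ with h | h
      · rw [inter_univ] at h; exact absurd h hne.ne_empty
      · rwa [inter_univ] at h
    have hdisj : Pairwise (Function.onFun (MeasureTheory.AEDisjoint volume) (fun i : H => (i : Set ℝ))) := by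
      intro i j hij
      by_contra hcon
      have hpos : 0 < volume ((i : Set ℝ) ∩ j) := pos_iff_ne_zero.mpr hcon
      have hm : NullMeasurableSet ((i : Set ℝ) ∩ j) volume :=
        ((hH i.2).2.1).inter ((hH j.2).2.1)
      obtain ⟨M, hM, hMsub⟩ := exists_memCalL_subset hm hpos
      exact hpair i i.2 j j.2 (fun h => hij (Subtype.ext h)) ⟨M, hM, hMsub⟩
    have hc := MeasureTheory.Measure.countable_meas_pos_of_disjoint_iUnion₀
      (μ := volume) (As := fun i : H => (i : Set ℝ)) (fun i => (hH i.2).2.1) hdisj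
    have huniv : {i : ↥H | 0 < volume (i : Set ℝ)} = univ :=
      eq_univ_of_forall fun i => hposm i i.2
    rw [huniv] at hc
    rw [← Set.countable_coe_iff]
    exact Set.countable_univ_iff.mp hc
  refine ⟨?_, main⟩
  intro H hH hcard
  by_contra hcon
  push_neg at hcon
  have hcnt : H.Countable := main H hH (by
    intro K hK L hL hKL hM
    obtain ⟨M, hM1, hM2⟩ := hM
    exact hcon K hK L hL hKL M hM1 hM2)
  have h1 : Cardinal.mk H ≤ Cardinal.aleph0 := hcnt.le_aleph0
  rw [hcard] at h1
  exact absurd h1 (by simpa using (Cardinal.aleph_lt_aleph.mpr (zero_lt_one)).not_ge)
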